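/- arXiv:1210.0805 — 4 statements merged into one kernel-verified Lean document; each statement's English description precedes it below -/
import Mathlib

section
/- Let q_Ω(t) := (I_m + tΩ)_Q denote the orthogonal Q-factor in the unique QR-decomposition of I_m + tΩ for skew-symmetric Ω. Then q_Ω(0) = I_m and the derivative of t ↦ q_Ω(t) at t = 0 equals Ω. -/
open Matrix Asymptotics Filter

private lemma qfd_t2_bigO_t2 : (fun t : ℝ => t ^ 2 * t ^ 2) =O[nhds 0] fun t : ℝ => t ^ 2 := by
  have ht2 : Tendsto (fun t : ℝ => t ^ 2) (nhds 0) (nhds 0) := by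
    simpa using (continuous_pow 2).tendsto (0 : ℝ)
  simpa using (isBigO_refl (fun t : ℝ => t ^ 2) (nhds 0)).mul (ht2.isBigO_one ℝ)

/-- Key Cholesky stability lemma: if `R t` is upper triangular with positive
diagonal and `(R t)ᵀ * R t = 1 - t^2 • (Ω*Ω)` entrywise, then each entry of
`R t` differs from the identity by `O(t^2)` near `t = 0`. -/
private lemma qfd_cholesky_bigO (m : ℕ) (Ω : Matrix (Fin m) (Fin m) ℝ)
    (R : ℝ → Matrix (Fin m) (Fin m) ℝ)
    (hlow : ∀ t (i j : Fin m), j < i → R t i j = 0)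
    (hentry : ∀ t (i j : Fin m),
      ∑ k, R t k i * R t k j = (if i = j then (1:ℝ) else 0) - t ^ 2 * (Ω * Ω) i j)
    (hRpos : ∀ t i, 0 < R t i i) :
    ∀ i j : Fin m,
      (fun t => R t i j - if i = j then 1 else 0) =O[nhds (0:ℝ)] fun t => t ^ 2 := by
  have key : ∀ (n : ℕ) (i j : Fin m), (j : ℕ) * m + (i : ℕ) < n →
      (fun t => R t i j - if i = j then 1 else 0) =O[nhds (0:ℝ)] fun t => t ^ 2 := by
    intro n
    induction n with
    | zero => intro i j h; omega
    | succ n IH =>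
      intro i j hn
      have hmpos : 0 < m := i.pos
      -- O(t^2) for the constant part
      have hconst : ∀ c : ℝ, (fun t : ℝ => -(t ^ 2 * c)) =O[nhds 0] fun t => t ^ 2 := by
        intro c
        have := (isBigO_refl (fun t : ℝ => t ^ 2) (nhds 0)).const_mul_left (-c)
        exact this.congr_left fun t => by ring
      rcases lt_trichotomy i j with hij | hij | hij
      · -- off-diagonal: i < j
        have hmul : (i:ℕ) * m + m ≤ (j:ℕ) * m := by
          calc (i:ℕ) * m + m = ((i:ℕ) + 1) * m := by ring
            _ ≤ (j:ℕ) * m := Nat.mul_le_mul_right m hij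
        have hsum : (fun t => ∑ k ∈ Finset.univ.erase i, R t k i * R t k j)
            =O[nhds (0:ℝ)] fun t => t ^ 2 := by
          apply IsBigO.fun_sum
          intro k hk
          have hki : k ≠ i := Finset.ne_of_mem_erase hk
          rcases lt_or_gt_of_ne hki with hk1 | hk1
          · -- k < i
            have h1 : (fun t => R t k i) =O[nhds (0:ℝ)] fun t => t ^ 2 := by
              have hkm : (k:ℕ) < m := k.isLt
              have hk1' : (k:ℕ) < (i:ℕ) := hk1
              have := IH k i (by omega)
              simpa [hki] using this
            have h2 : (fun t => R t k j) =O[nhds (0:ℝ)] fun t => t ^ 2 := by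
              have hk1' : (k:ℕ) < (i:ℕ) := hk1
              have hkj : k ≠ j := by
                intro hkj; rw [hkj] at hk1
                exact absurd (hk1.trans hij) (lt_irrefl _)
              have := IH k j (by omega)
              simpa [hkj] using this
            exact (h1.mul h2).trans qfd_t2_bigO_t2
          · -- i < k
            have hz : (fun t => R t k i * R t k j) = fun _ => (0:ℝ) := by
              funext t; rw [hlow t k i hk1, zero_mul]
            rw [hz]; exact isBigO_zero _ _
        have hsplit : ∀ t, R t i i * R t i j =
            -(t ^ 2 * (Ω * Ω) i j) - ∑ k ∈ Finset.univ.erase i, R t k i * R t k j := by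
          intro t
          have h := hentry t i j
          rw [if_neg hij.ne] at h
          have hadd := Finset.add_sum_erase Finset.univ (fun k => R t k i * R t k j)
            (Finset.mem_univ i)
          rw [h] at hadd
          beta_reduce at hadd
          linarith [hadd]
        have hf : (fun t => R t i i * R t i j) =O[nhds (0:ℝ)] fun t => t ^ 2 := by
          have := (hconst ((Ω * Ω) i j)).sub hsum
          exact this.congr_left fun t => (hsplit t).symm
        -- R t i i tends to 1
        have hii : (fun t => R t i i - 1) =O[nhds (0:ℝ)] fun t => t ^ 2 := by
          have := IH i i (by omega)
          simpa using this
        have ht2 : Tendsto (fun t : ℝ => t ^ 2) (nhds 0) (nhds 0) := by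
          simpa using (continuous_pow 2).tendsto (0 : ℝ)
        have htend : Tendsto (fun t => R t i i) (nhds (0:ℝ)) (nhds 1) := by
          have h0 := hii.trans_tendsto ht2
          have := h0.add (tendsto_const_nhds (x := (1:ℝ)))
          simpa using this
        have hinv : Tendsto (fun t => (R t i i)⁻¹) (nhds (0:ℝ)) (nhds 1) := by
          simpa using htend.inv₀ one_ne_zero
        have hres : (fun t => R t i j) =O[nhds (0:ℝ)] fun t => t ^ 2 := by
          have := hf.mul (hinv.isBigO_one ℝ)
          have heq : (fun t => R t i i * R t i j * (R t i i)⁻¹) = fun t => R t i j := by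
            funext t
            rw [mul_comm (R t i i) (R t i j), mul_assoc,
              mul_inv_cancel₀ (hRpos t i).ne', mul_one]
          rw [heq] at this
          simpa using this
        simpa [hij.ne] using hres
      · -- diagonal
        subst hij
        have hsum : (fun t => ∑ k ∈ Finset.univ.erase i, R t k i * R t k i)
            =O[nhds (0:ℝ)] fun t => t ^ 2 := by
          apply IsBigO.fun_sum
          intro k hk
          have hki : k ≠ i := Finset.ne_of_mem_erase hk
          rcases lt_or_gt_of_ne hki with hk1 | hk1
          · have h1 : (fun t => R t k i) =O[nhds (0:ℝ)] fun t => t ^ 2 := by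
              have := IH k i (by omega)
              simpa [hki] using this
            exact (h1.mul h1).trans qfd_t2_bigO_t2
          · have hz : (fun t => R t k i * R t k i) = fun _ => (0:ℝ) := by
              funext t; rw [hlow t k i hk1, zero_mul]
            rw [hz]; exact isBigO_zero _ _
        have hsplit : ∀ t, R t i i * R t i i - 1 =
            -(t ^ 2 * (Ω * Ω) i i) - ∑ k ∈ Finset.univ.erase i, R t k i * R t k i := by
          intro t
          have h := hentry t i i
          rw [if_pos rfl] at h
          have hadd := Finset.add_sum_erase Finset.univ (fun k => R t k i * R t k i)
            (Finset.mem_univ i)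
          rw [← hadd] at h
          beta_reduce at h
          linarith
        have hsq : (fun t => R t i i * R t i i - 1) =O[nhds (0:ℝ)] fun t => t ^ 2 := by
          have := (hconst ((Ω * Ω) i i)).sub hsum
          exact this.congr_left fun t => (hsplit t).symm
        have hb : ∀ t, |R t i i - 1| ≤ |R t i i * R t i i - 1| := by
          intro t
          have hp := hRpos t i
          rw [show R t i i * R t i i - 1 = (R t i i - 1) * (R t i i + 1) by ring, abs_mul,
            abs_of_pos (by linarith : (0:ℝ) < R t i i + 1)]
          nlinarith [abs_nonneg (R t i i - 1)]
        have : (fun t => R t i i - 1) =O[nhds (0:ℝ)] fun t => R t i i * R t i i - 1 :=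
          IsBigO.of_bound 1 (Filter.Eventually.of_forall fun t => by
            simpa using hb t)
        simpa using this.trans hsq
      · -- lower triangular: j < i
        have hz : (fun t => R t i j - if i = j then (1:ℝ) else 0) = fun _ => (0:ℝ) := by
          funext t
          rw [hlow t i j hij, if_neg (ne_of_gt hij)]
          ring
        rw [hz]; exact isBigO_zero _ _
  intro i j
  exact key ((j : ℕ) * m + (i : ℕ) + 1) i j (Nat.lt_succ_self _)

/-- Let `q(t)` be the orthogonal Q-factor of the unique QR-decomposition of
`I + tΩ` for a skew-symmetric `Ω`. Then `q(0) = I` and the derivative of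
`t ↦ q(t)` at `t = 0` equals `Ω` (entrywise). -/
theorem qFactor_deriv_at_zero
    (m : ℕ) (Ω : Matrix (Fin m) (Fin m) ℝ) (hskew : Ωᵀ = -Ω)
    (q R : ℝ → Matrix (Fin m) (Fin m) ℝ)
    (hq : ∀ t, (q t)ᵀ * q t = 1)
    (hR : ∀ t, (R t).BlockTriangular (id : Fin m → Fin m))
    (hRpos : ∀ t, ∀ i : Fin m, 0 < R t i i)
    (hQR : ∀ t, 1 + t • Ω = q t * R t) :
    q 0 = 1 ∧ ∀ i j : Fin m, HasDerivAt (fun t => q t i j) (Ω i j) 0 := by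
  have hlow : ∀ t (i j : Fin m), j < i → R t i j = 0 := fun t i j h => hR t h
  -- the Gram matrix identity
  have hS : ∀ t, (R t)ᵀ * R t = 1 - t ^ 2 • (Ω * Ω) := by
    intro t
    have h1 : (R t)ᵀ * R t = (q t * R t)ᵀ * (q t * R t) := by
      rw [transpose_mul, Matrix.mul_assoc, ← Matrix.mul_assoc (q t)ᵀ, hq t, Matrix.one_mul]
    rw [h1, ← hQR t]
    rw [transpose_add, transpose_smul, transpose_one, hskew]
    simp only [Matrix.add_mul, Matrix.mul_add, Matrix.one_mul, Matrix.mul_one,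
      Matrix.smul_mul, Matrix.mul_smul, smul_smul, Matrix.neg_mul, Matrix.mul_neg,
      smul_neg, neg_neg, ← sq]
    module
  have hentry : ∀ t (i j : Fin m),
      ∑ k, R t k i * R t k j = (if i = j then (1:ℝ) else 0) - t ^ 2 * (Ω * Ω) i j := by
    intro t i j
    have h := Matrix.ext_iff.2 (hS t) i j
    rw [Matrix.mul_apply] at h
    simp only [Matrix.transpose_apply] at h
    rw [h]
    simp [Matrix.sub_apply, Matrix.smul_apply, Matrix.one_apply, smul_eq_mul]
  have keyO := qfd_cholesky_bigO m Ω R hlow hentry hRpos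
  -- value at 0
  have hR0 : R 0 = 1 := by
    ext i j
    have h := (keyO i j).bound
    obtain ⟨C, hC⟩ := h
    have h0 := hC.self_of_nhds
    simp at h0
    have : R 0 i j - (if i = j then (1:ℝ) else 0) = 0 := by
      have := h0
      simpa using this
    rw [Matrix.one_apply]
    linarith [this]
  have hq0 : q 0 = 1 := by
    have h := hQR 0
    rw [hR0, Matrix.mul_one] at h
    simpa using h.symm
  refine ⟨hq0, fun i j => ?_⟩
  -- bound on q entries
  have hqbound : ∀ t (a b : Fin m), |q t a b| ≤ 1 := by
    intro t a b
    have h := Matrix.ext_iff.2 (hq t) b b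
    rw [Matrix.mul_apply] at h
    simp only [Matrix.transpose_apply, Matrix.one_apply_eq] at h
    have hsq : q t a b * q t a b ≤ 1 := by
      rw [← h]
      have := Finset.single_le_sum (f := fun k => q t k b * q t k b)
        (fun k _ => mul_self_nonneg _) (Finset.mem_univ a)
      exact this
    nlinarith [abs_nonneg (q t a b), sq_abs (q t a b)]
  -- entrywise QR identity
  have hqr_entry : ∀ t, (if i = j then (1:ℝ) else 0) + t * Ω i j
      = ∑ k, q t i k * R t k j := by
    intro t
    have h := Matrix.ext_iff.2 (hQR t) i j
    rw [Matrix.mul_apply] at h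
    simpa [Matrix.add_apply, Matrix.one_apply, Matrix.smul_apply, smul_eq_mul] using h
  have hdiff : (fun t => q t i j - (if i = j then (1:ℝ) else 0) - t * Ω i j)
      =O[nhds (0:ℝ)] fun t => t ^ 2 := by
    have hsum : (fun t => ∑ k, q t i k * (R t k j - if k = j then 1 else 0))
        =O[nhds (0:ℝ)] fun t => t ^ 2 := by
      apply IsBigO.fun_sum
      intro k _
      have h1 : (fun t => q t i k) =O[nhds (0:ℝ)] (fun _ => (1:ℝ)) :=
        IsBigO.of_bound 1 (Filter.Eventually.of_forall fun t => by
          simpa using hqbound t i k)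
      have := h1.mul (keyO k j)
      simpa using this
    have heq : (fun t => q t i j - (if i = j then (1:ℝ) else 0) - t * Ω i j)
        = fun t => -∑ k, q t i k * (R t k j - if k = j then 1 else 0) := by
      funext t
      have h := hqr_entry t
      have hexp : ∑ k, q t i k * (R t k j - if k = j then 1 else 0)
          = (∑ k, q t i k * R t k j) - q t i j := by
        simp only [mul_sub, mul_ite, mul_one, mul_zero, Finset.sum_sub_distrib,
          Finset.sum_ite_eq', Finset.mem_univ, if_true]
      rw [hexp, ← h]
      ring
    rw [heq]
    exact hsum.neg_left
  have hlito : (fun t : ℝ => t ^ 2) =o[nhds (0:ℝ)] fun t => t := by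
    have h1 : (fun t : ℝ => t) =o[nhds (0:ℝ)] (fun _ => (1:ℝ)) :=
      (isLittleO_one_iff ℝ).2 (by exact tendsto_id)
    have := h1.mul_isBigO (isBigO_refl (fun t : ℝ => t) (nhds 0))
    simpa [sq] using this
  have hfinal := hdiff.trans_isLittleO hlito
  rw [hasDerivAt_iff_isLittleO]
  have hq0ij : q 0 i j = if i = j then (1:ℝ) else 0 := by
    rw [hq0, Matrix.one_apply]
  simpa [hq0ij, smul_eq_mul] using hfinal
end

section
/- The map α_{P,θ}(ξ) = θ q_{θᵀ[ξ,P]θ}(1) θᵀ P θ (q_{θᵀ[ξ,P]θ}(1))ᵀ θᵀ satisfies the retraction conditions: α_{P,θ}(0) = P, and d/dt|_{t=0} α_{P,θ}(tξ) = ξ for every ξ ∈ T_P Gr_{k,m}. -/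
open Matrix Finset

lemma fin_sum_Iio (m : ℕ) (i : Fin m) (f : ℕ → ℝ) :
    ∑ l ∈ Finset.Iio i, f (l : ℕ) = ∑ k ∈ Finset.range (i : ℕ), f k := by
  rw [← Nat.Iio_eq_range, ← Fin.map_valEmbedding_Iio, Finset.sum_map]
  rfl

lemma pow5 (n : ℕ) : 2 + 4 * ∑ k ∈ Finset.range n, (5:ℝ)^(k+1) ≤ 5^(n+1) := by
  induction n with
  | zero => norm_num
  | succ n ih =>
    rw [Finset.sum_range_succ]
    have h5 : (0:ℝ) < 5 ^ (n+1) := by positivity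
    rw [pow_succ (5:ℝ) (n+1)]
    nlinarith

lemma chol_bound {m : ℕ} (R E : Matrix (Fin m) (Fin m) ℝ) (ε : ℝ)
    (htri : R.BlockTriangular (id : Fin m → Fin m))
    (hpos : ∀ i, 0 < R i i)
    (hRR : Rᵀ * R = 1 + E)
    (hE : ∀ i j, |E i j| ≤ ε)
    (hε : ε * 5 ^ (m + 1) ≤ 1) (hε0 : 0 ≤ ε) :
    ∀ i j : Fin m, |R i j - (1 : Matrix (Fin m) (Fin m) ℝ) i j| ≤ 5 ^ ((i:ℕ)+1) * ε := by
  have h5m : (5:ℝ) ≤ 5 ^ (m+1) := by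
    calc (5:ℝ) = 5^1 := (pow_one 5).symm
    _ ≤ 5^(m+1) := pow_le_pow_right₀ (by norm_num) (by omega)
  have hεle : ε ≤ 1 := by nlinarith [mul_le_mul_of_nonneg_left h5m hε0]
  have hsumsq : ∀ j : Fin m, ∑ l, R l j * R l j = 1 + E j j := by
    intro j
    have := congrFun (congrFun hRR j) j
    simpa [Matrix.mul_apply, Matrix.transpose_apply, Matrix.one_apply, Matrix.add_apply] using this
  have habs : ∀ l j : Fin m, |R l j| ≤ 2 := by
    intro l j
    have h1 : R l j * R l j ≤ ∑ l', R l' j * R l' j := by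
      apply Finset.single_le_sum (f := fun l' => R l' j * R l' j)
      · intro l' _; exact mul_self_nonneg _
      · exact Finset.mem_univ l
    rw [hsumsq j] at h1
    have := hE j j
    rw [abs_le] at this
    rw [abs_le]; constructor <;> nlinarith
  have main : ∀ n : ℕ, ∀ i : Fin m, (i:ℕ) = n →
      ∀ j, |R i j - (1 : Matrix (Fin m) (Fin m) ℝ) i j| ≤ 5 ^ ((i:ℕ)+1) * ε := by
    intro n
    induction n using Nat.strong_induction_on with
    | _ n IH =>
    intro i hin
    have hppos : (0:ℝ) < 5 ^ ((i:ℕ)+1) := by positivity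
    have hpm : (5:ℝ) ^ ((i:ℕ)+1) ≤ 5 ^ (m+1) :=
      pow_le_pow_right₀ (by norm_num) (by omega)
    have key : ∀ j' : Fin m, i ≤ j' →
        |R i i * R i j' - (1 : Matrix (Fin m) (Fin m) ℝ) i j'| ≤ 5 ^ ((i:ℕ)+1) / 2 * ε := by
      intro j' hij'
      have hsum : (1 : Matrix (Fin m) (Fin m) ℝ) i j' + E i j' = ∑ l, R l i * R l j' := by
        have := congrFun (congrFun hRR i) j'
        simpa [Matrix.mul_apply, Matrix.transpose_apply, Matrix.add_apply] using this.symm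
      have hsplit : ∑ l, R l i * R l j' = (∑ l ∈ Finset.Iio i, R l i * R l j') + R i i * R i j' := by
        rw [← Finset.sum_subset (Finset.subset_univ (Finset.Iic i))]
        · rw [← Finset.Iio_insert, Finset.sum_insert (by simp)]; ring
        · intro l _ hl
          have hil : i < l := by simpa using hl
          have : R l i = 0 := htri (by simpa using hil)
          simp [this]
      have hterm : ∀ l ∈ Finset.Iio i, |R l i * R l j'| ≤ 5 ^ ((l:ℕ)+1) * ε * 2 := by
        intro l hl
        have hli : l < i := by simpa using hl
        have h1 : |R l i| ≤ 5 ^ ((l:ℕ)+1) * ε := by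
          have := IH (l:ℕ) (by rw [← hin]; exact hli) l rfl i
          have hne : (1 : Matrix (Fin m) (Fin m) ℝ) l i = 0 :=
            Matrix.one_apply_ne (Fin.ne_of_lt hli)
          rwa [hne, sub_zero] at this
        calc |R l i * R l j'| = |R l i| * |R l j'| := abs_mul _ _
        _ ≤ (5 ^ ((l:ℕ)+1) * ε) * 2 :=
          mul_le_mul h1 (habs l j') (abs_nonneg _) (by positivity)
      have hS : |∑ l ∈ Finset.Iio i, R l i * R l j'| ≤ 2 * ∑ k ∈ Finset.range (i:ℕ), (5:ℝ)^(k+1) * ε := by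
        calc |∑ l ∈ Finset.Iio i, R l i * R l j'| ≤ ∑ l ∈ Finset.Iio i, |R l i * R l j'| :=
          Finset.abs_sum_le_sum_abs _ _
        _ ≤ ∑ l ∈ Finset.Iio i, 5 ^ ((l:ℕ)+1) * ε * 2 := Finset.sum_le_sum hterm
        _ = ∑ k ∈ Finset.range (i:ℕ), 5 ^ (k+1) * ε * 2 :=
          fin_sum_Iio m i (fun k => 5 ^ (k+1) * ε * 2)
        _ = 2 * ∑ k ∈ Finset.range (i:ℕ), (5:ℝ)^(k+1) * ε := by
          rw [Finset.mul_sum]; apply Finset.sum_congr rfl; intro k _; ring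
      have heq : R i i * R i j' - (1 : Matrix (Fin m) (Fin m) ℝ) i j' =
          E i j' - ∑ l ∈ Finset.Iio i, R l i * R l j' := by
        have := hsum.trans hsplit
        linarith
      rw [heq]
      have hp := pow5 (i:ℕ)
      have hSm : ∑ k ∈ Finset.range (i:ℕ), (5:ℝ)^(k+1) * ε
          = (∑ k ∈ Finset.range (i:ℕ), (5:ℝ)^(k+1)) * ε := by
        rw [Finset.sum_mul]
      have hSnn : (0:ℝ) ≤ ∑ k ∈ Finset.range (i:ℕ), (5:ℝ)^(k+1) := by positivity
      calc |E i j' - ∑ l ∈ Finset.Iio i, R l i * R l j'|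
          ≤ |E i j'| + |∑ l ∈ Finset.Iio i, R l i * R l j'| := abs_sub _ _
      _ ≤ ε + 2 * ∑ k ∈ Finset.range (i:ℕ), (5:ℝ)^(k+1) * ε := add_le_add (hE i j') hS
      _ ≤ 5 ^ ((i:ℕ)+1) / 2 * ε := by rw [hSm]; nlinarith
    have hki := key i le_rfl
    rw [Matrix.one_apply_eq] at hki
    have hsmall : 5 ^ ((i:ℕ)+1) / 2 * ε ≤ 1 / 2 := by nlinarith
    have hRii : (1:ℝ)/2 ≤ R i i := by nlinarith [hpos i, abs_le.mp hki]
    have hdiag : |R i i - 1| ≤ 5 ^ ((i:ℕ)+1) * ε := by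
      have habs2 : |R i i - 1| * |R i i + 1| = |R i i * R i i - 1| := by
        rw [← abs_mul]; ring_nf
      have h2 : (1:ℝ) ≤ |R i i + 1| := by rw [abs_of_pos (by linarith)]; linarith
      nlinarith [abs_nonneg (R i i - 1), abs_nonneg (R i i * R i i - 1)]
    intro j
    rcases lt_trichotomy j i with hji | hji | hji
    · have h0 : R i j = 0 := htri (by simpa using hji)
      have h1 : (1 : Matrix (Fin m) (Fin m) ℝ) i j = 0 := Matrix.one_apply_ne (Fin.ne_of_gt hji)
      rw [h0, h1, sub_zero, abs_zero]; positivity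
    · subst hji; rwa [Matrix.one_apply_eq]
    · have hkj := key j (le_of_lt hji)
      have h1 : (1 : Matrix (Fin m) (Fin m) ℝ) i j = 0 := Matrix.one_apply_ne (Fin.ne_of_lt hji)
      rw [h1, sub_zero] at hkj ⊢
      have habs3 : |R i i * R i j| = |R i i| * |R i j| := abs_mul _ _
      have h4 : |R i i| = R i i := abs_of_pos (hpos i)
      nlinarith [abs_nonneg (R i j)]
  intro i j
  exact main (i:ℕ) i rfl j

lemma hasDerivAt_of_quadratic_bound {f : ℝ → ℝ} {a c C δ : ℝ} (hC : 0 ≤ C) (hδ : 0 < δ)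
    (hf0 : f 0 = c) (h : ∀ t : ℝ, |t| ≤ δ → |f t - c - t * a| ≤ C * t ^ 2) :
    HasDerivAt f a 0 := by
  rw [hasDerivAt_iff_isLittleO]
  rw [Asymptotics.isLittleO_iff]
  intro ε hε
  have hpos : 0 < min δ (ε / (C + 1)) := lt_min hδ (by positivity)
  filter_upwards [Metric.ball_mem_nhds (0:ℝ) hpos] with t ht
  rw [Metric.mem_ball, Real.dist_eq, sub_zero] at ht
  have ht1 : |t| ≤ δ := le_of_lt (lt_of_lt_of_le ht (min_le_left _ _))
  have ht2 : |t| ≤ ε / (C + 1) := le_of_lt (lt_of_lt_of_le ht (min_le_right _ _))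
  have := h t ht1
  rw [hf0] at *
  simp only [sub_zero, smul_eq_mul, Real.norm_eq_abs]
  have h1 : |f t - c - t * a| ≤ C * t ^ 2 := by simpa [hf0] using h t ht1
  have h2 : C * t ^ 2 ≤ ε * |t| := by
    have habs : t ^ 2 = |t| * |t| := by rw [← abs_mul, abs_mul_self]; ring
    rw [habs]
    have h3 : C * |t| ≤ ε := by
      have := mul_le_mul_of_nonneg_left ht2 hC
      have hd : C * (ε / (C+1)) ≤ ε := by
        rw [div_eq_mul_inv]
        have he : C * (ε * (C+1)⁻¹) = ε * (C * (C+1)⁻¹) := by ring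
        rw [he]
        have hf : C * (C+1)⁻¹ ≤ 1 := by
          rw [mul_inv_le_iff₀ (by linarith)]; linarith
        nlinarith
      linarith
    nlinarith [abs_nonneg t]
  exact le_trans h1 h2

lemma entry_deriv_mul {m : ℕ} {M N : ℝ → Matrix (Fin m) (Fin m) ℝ}
    {M' N' : Matrix (Fin m) (Fin m) ℝ} {t0 : ℝ}
    (hM : ∀ i j, HasDerivAt (fun t => M t i j) (M' i j) t0)
    (hN : ∀ i j, HasDerivAt (fun t => N t i j) (N' i j) t0) :
    ∀ i j, HasDerivAt (fun t => (M t * N t) i j) ((M' * N t0 + M t0 * N') i j) t0 := by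
  intro i j
  have h : HasDerivAt (fun t => ∑ l, M t i l * N t l j)
      (∑ l, (M' i l * N t0 l j + M t0 i l * N' l j)) t0 :=
    HasDerivAt.fun_sum (fun l _ => (hM i l).mul (hN l j))
  have e1 : (fun t => ∑ l, M t i l * N t l j) = fun t => (M t * N t) i j := by
    funext t; rw [Matrix.mul_apply]
  have e2 : (∑ l, (M' i l * N t0 l j + M t0 i l * N' l j)) = (M' * N t0 + M t0 * N') i j := by
    rw [Matrix.add_apply, Matrix.mul_apply, Matrix.mul_apply, ← Finset.sum_add_distrib]
  rwa [e1, e2] at h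

/-- The map `α_{P,θ}` satisfies the retraction conditions: `α_{P,θ}(0) = P`
and `d/dt|_{t=0} α_{P,θ}(tξ) = ξ` for every tangent vector `ξ = [P,Ω]`.
Here `q t` is the orthogonal Q-factor of `I + θᵀ[tξ,P]θ = I + t • θᵀ[ξ,P]θ`,
so that `α_{P,θ}(tξ) = θ (q t) θᵀ P θ (q t)ᵀ θᵀ`. -/
theorem retraction_conditions
    (m : ℕ) (P θ Ω : Matrix (Fin m) (Fin m) ℝ)
    (hproj : P * P = P) (hsym : Pᵀ = P) (hθ : θᵀ * θ = 1) (hskew : Ωᵀ = -Ω)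
    (ξ : Matrix (Fin m) (Fin m) ℝ) (hξ : ξ = P * Ω - Ω * P)
    (q R : ℝ → Matrix (Fin m) (Fin m) ℝ)
    (hq : ∀ t, (q t)ᵀ * q t = 1)
    (hR : ∀ t, (R t).BlockTriangular (id : Fin m → Fin m))
    (hRpos : ∀ t, ∀ i : Fin m, 0 < R t i i)
    (hQR : ∀ t : ℝ, 1 + t • (θᵀ * (ξ * P - P * ξ) * θ) = q t * R t) :
    θ * q 0 * θᵀ * P * θ * (q 0)ᵀ * θᵀ = P ∧
    ∀ i j : Fin m,
      HasDerivAt (fun t => (θ * q t * θᵀ * P * θ * (q t)ᵀ * θᵀ) i j) (ξ i j) 0 := by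
  have hθθ : θ * θᵀ = 1 := mul_eq_one_comm.mp hθ
  have hξsym : ξᵀ = ξ := by
    rw [hξ, Matrix.transpose_sub, Matrix.transpose_mul, Matrix.transpose_mul, hsym, hskew]
    noncomm_ring
  set Ψ : Matrix (Fin m) (Fin m) ℝ := θᵀ * (ξ * P - P * ξ) * θ with hΨdef
  have hΨT : Ψᵀ = -Ψ := by
    rw [hΨdef, Matrix.transpose_mul, Matrix.transpose_mul, Matrix.transpose_transpose,
      Matrix.transpose_sub, Matrix.transpose_mul, Matrix.transpose_mul, hsym, hξsym]
    noncomm_ring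
  have hAA : ∀ t : ℝ, (1 + t • Ψ)ᵀ * (1 + t • Ψ) = 1 + t ^ 2 • (Ψᵀ * Ψ) := by
    intro t
    rw [Matrix.transpose_add, Matrix.transpose_one, Matrix.transpose_smul]
    rw [Matrix.add_mul, Matrix.mul_add, Matrix.mul_add, Matrix.one_mul, Matrix.mul_one]
    simp only [Matrix.one_mul, Matrix.mul_smul, Matrix.smul_mul, smul_smul, hΨT,
      smul_neg, Matrix.neg_mul, Matrix.mul_neg, ← pow_two]
    abel
  have hRR : ∀ t : ℝ, (R t)ᵀ * (R t) = 1 + t ^ 2 • (Ψᵀ * Ψ) := by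
    intro t
    have h1 : (q t * R t)ᵀ * (q t * R t) = (R t)ᵀ * (R t) := by
      rw [Matrix.transpose_mul, Matrix.mul_assoc, ← Matrix.mul_assoc (q t)ᵀ, hq t,
        Matrix.one_mul]
    rw [← h1, ← hQR t, hAA t]
  -- bound constant
  set K : ℝ := (∑ i, ∑ j, |(Ψᵀ * Ψ) i j|) + 1 with hKdef
  have hK1 : (1:ℝ) ≤ K := by
    have : (0:ℝ) ≤ ∑ i, ∑ j, |(Ψᵀ * Ψ) i j| := by positivity
    simp only [hKdef]; linarith
  have hK0 : (0:ℝ) < K := by linarith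
  have hKb : ∀ i j, |(Ψᵀ * Ψ) i j| ≤ K := by
    intro i j
    have h1 : |(Ψᵀ * Ψ) i j| ≤ ∑ j', |(Ψᵀ * Ψ) i j'| :=
      Finset.single_le_sum (f := fun j' => |(Ψᵀ * Ψ) i j'|) (fun _ _ => abs_nonneg _)
        (Finset.mem_univ j)
    have h2 : ∑ j', |(Ψᵀ * Ψ) i j'| ≤ ∑ i', ∑ j', |(Ψᵀ * Ψ) i' j'| :=
      Finset.single_le_sum (f := fun i' => ∑ j', |(Ψᵀ * Ψ) i' j'|)
        (fun _ _ => Finset.sum_nonneg fun _ _ => abs_nonneg _) (Finset.mem_univ i)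
    simp only [hKdef]; linarith
  have hp0 : (0:ℝ) < 5 ^ (m+1) := by positivity
  set δ : ℝ := min 1 ((K * 5 ^ (m+1))⁻¹) with hδdef
  have hδ0 : 0 < δ := lt_min one_pos (by positivity)
  have hδ1 : δ ≤ 1 := min_le_left _ _
  have hδ2 : δ ≤ (K * 5 ^ (m+1))⁻¹ := min_le_right _ _
  have hεcond : ∀ t : ℝ, |t| ≤ δ → K * t ^ 2 * 5 ^ (m+1) ≤ 1 := by
    intro t ht
    have h1 : t ^ 2 ≤ δ ^ 2 := by nlinarith [abs_nonneg t, sq_abs t]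
    have h2 : δ ^ 2 ≤ δ := by nlinarith
    have h3 : K * δ * 5 ^ (m+1) ≤ 1 := by
      have := mul_le_mul_of_nonneg_left hδ2 (le_of_lt (by positivity : (0:ℝ) < K * 5 ^ (m+1)))
      calc K * δ * 5 ^ (m+1) = (K * 5 ^ (m+1)) * δ := by ring
      _ ≤ (K * 5 ^ (m+1)) * (K * 5 ^ (m+1))⁻¹ := by
          apply mul_le_mul_of_nonneg_left hδ2 (by positivity)
      _ = 1 := mul_inv_cancel₀ (by positivity)
    nlinarith
  -- bound on R entries
  have hRbnd : ∀ t : ℝ, |t| ≤ δ → ∀ i j : Fin m,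
      |R t i j - (1 : Matrix (Fin m) (Fin m) ℝ) i j| ≤ 5 ^ (m+1) * K * t ^ 2 := by
    intro t ht i j
    have hE : ∀ i j, |(t ^ 2 • (Ψᵀ * Ψ)) i j| ≤ K * t ^ 2 := by
      intro i j
      rw [Matrix.smul_apply, smul_eq_mul, abs_mul, abs_of_nonneg (sq_nonneg t)]
      calc t ^ 2 * |(Ψᵀ * Ψ) i j| ≤ t ^ 2 * K :=
        mul_le_mul_of_nonneg_left (hKb i j) (sq_nonneg t)
      _ = K * t ^ 2 := by ring
    have := chol_bound (R t) (t ^ 2 • (Ψᵀ * Ψ)) (K * t ^ 2) (hR t) (hRpos t) (hRR t)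
      hE (hεcond t ht) (by positivity) i j
    calc |R t i j - (1 : Matrix (Fin m) (Fin m) ℝ) i j| ≤ 5 ^ ((i:ℕ)+1) * (K * t ^ 2) := this
    _ ≤ 5 ^ (m+1) * (K * t ^ 2) := by
        have h5 : (5:ℝ) ^ ((i:ℕ)+1) ≤ 5 ^ (m+1) := pow_le_pow_right₀ (by norm_num) (by omega)
        exact mul_le_mul_of_nonneg_right h5 (by positivity)
    _ = 5 ^ (m+1) * K * t ^ 2 := by ring
  have hR0 : R 0 = 1 := by
    ext i j
    have := hRbnd 0 (by simpa using le_of_lt hδ0) i j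
    rw [zero_pow two_ne_zero, mul_zero] at this
    have h0 : |R 0 i j - (1 : Matrix (Fin m) (Fin m) ℝ) i j| ≤ 0 := by
      simpa using this
    have h1 := abs_nonpos_iff.mp h0
    exact sub_eq_zero.mp h1
  have hq0 : q 0 = 1 := by
    have := hQR 0
    rw [hR0, Matrix.mul_one] at this
    simp at this
    exact this.symm
  constructor
  · rw [hq0, Matrix.mul_one, Matrix.transpose_one, Matrix.mul_one]
    rw [hθθ, Matrix.one_mul, Matrix.mul_assoc, hθθ, Matrix.mul_one]
  -- derivative part
  have qabs : ∀ t : ℝ, ∀ i j, |q t i j| ≤ 1 := by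
    intro t i j
    have hqq : q t * (q t)ᵀ = 1 := mul_eq_one_comm.mpr (hq t)
    have h1 : ∑ l, q t i l * q t i l = 1 := by
      have := congrFun (congrFun hqq i) i
      simpa [Matrix.mul_apply, Matrix.transpose_apply, Matrix.one_apply] using this
    have h2 : q t i j * q t i j ≤ ∑ l, q t i l * q t i l := by
      apply Finset.single_le_sum (f := fun l => q t i l * q t i l)
      · intro l _; exact mul_self_nonneg _
      · exact Finset.mem_univ j
    rw [h1] at h2
    rw [abs_le]; constructor <;> nlinarith
  have hqA : ∀ t : ℝ, |t| ≤ δ → ∀ i j : Fin m,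
      |q t i j - (1 : Matrix (Fin m) (Fin m) ℝ) i j - t * Ψ i j|
        ≤ (m * (5 ^ (m+1) * K)) * t ^ 2 := by
    intro t ht i j
    have hkey : q t - (1 + t • Ψ) = q t * (1 - R t) := by
      rw [Matrix.mul_sub, Matrix.mul_one, ← hQR t]
    have hent : q t i j - (1 : Matrix (Fin m) (Fin m) ℝ) i j - t * Ψ i j
        = ∑ l, q t i l * ((1 : Matrix (Fin m) (Fin m) ℝ) - R t) l j := by
      have := congrFun (congrFun hkey i) j
      simpa [Matrix.sub_apply, Matrix.add_apply, Matrix.smul_apply, smul_eq_mul,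
        Matrix.mul_apply, sub_sub] using this
    rw [hent]
    calc |∑ l, q t i l * ((1 : Matrix (Fin m) (Fin m) ℝ) - R t) l j|
        ≤ ∑ l, |q t i l * ((1 : Matrix (Fin m) (Fin m) ℝ) - R t) l j| :=
          Finset.abs_sum_le_sum_abs _ _
    _ ≤ ∑ _l : Fin m, 5 ^ (m+1) * K * t ^ 2 := by
        apply Finset.sum_le_sum
        intro l _
        rw [abs_mul]
        have hb : |((1 : Matrix (Fin m) (Fin m) ℝ) - R t) l j| ≤ 5 ^ (m+1) * K * t ^ 2 := by
          rw [Matrix.sub_apply, abs_sub_comm]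
          exact hRbnd t ht l j
        calc |q t i l| * |((1 : Matrix (Fin m) (Fin m) ℝ) - R t) l j|
            ≤ 1 * (5 ^ (m+1) * K * t ^ 2) :=
              mul_le_mul (qabs t i l) hb (abs_nonneg _) zero_le_one
        _ = 5 ^ (m+1) * K * t ^ 2 := one_mul _
    _ = (m * (5 ^ (m+1) * K)) * t ^ 2 := by
        rw [Finset.sum_const, Finset.card_univ, Fintype.card_fin, nsmul_eq_mul]
        ring
  have hqD : ∀ i j, HasDerivAt (fun t => q t i j) (Ψ i j) 0 := by
    intro i j
    apply hasDerivAt_of_quadratic_bound (C := m * (5 ^ (m+1) * K)) (δ := δ)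
      (c := (1 : Matrix (Fin m) (Fin m) ℝ) i j)
    · positivity
    · exact hδ0
    · rw [hq0]
    · intro t ht
      exact hqA t ht i j
  have hqTD : ∀ i j, HasDerivAt (fun t => (q t)ᵀ i j) (Ψᵀ i j) 0 := by
    intro i j
    simpa [Matrix.transpose_apply] using hqD j i
  have hconstD : ∀ (B : Matrix (Fin m) (Fin m) ℝ) (i j : Fin m),
      HasDerivAt (fun _ : ℝ => B i j) ((0 : Matrix (Fin m) (Fin m) ℝ) i j) 0 := by
    intro B i j
    simpa using hasDerivAt_const (0:ℝ) (B i j)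
  have h1 := entry_deriv_mul (M := fun _ => θ) (N := q) (hconstD θ) hqD
  simp only [Matrix.zero_mul, zero_add] at h1
  have h2 := entry_deriv_mul (N := fun _ => θᵀ) h1 (hconstD θᵀ)
  simp only [Matrix.mul_zero, add_zero] at h2
  have h3 := entry_deriv_mul (N := fun _ => P) h2 (hconstD P)
  simp only [Matrix.mul_zero, add_zero] at h3
  have h4 := entry_deriv_mul (N := fun _ => θ) h3 (hconstD θ)
  simp only [Matrix.mul_zero, add_zero] at h4
  have h5 := entry_deriv_mul h4 hqTD
  have h6 := entry_deriv_mul (N := fun _ => θᵀ) h5 (hconstD θᵀ)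
  simp only [Matrix.mul_zero, add_zero] at h6
  simp only [hq0, Matrix.transpose_one, Matrix.mul_one, hθθ, Matrix.one_mul, hΨT,
    Matrix.mul_neg] at h6
  intro i j
  convert h6 i j using 2
  have hcanc : θ * Ψ * θᵀ = ξ * P - P * ξ := by
    rw [hΨdef]
    calc θ * (θᵀ * (ξ * P - P * ξ) * θ) * θᵀ
        = (θ * θᵀ) * (ξ * P - P * ξ) * (θ * θᵀ) := by noncomm_ring
    _ = ξ * P - P * ξ := by rw [hθθ, Matrix.one_mul, Matrix.mul_one]
  have hPXP : P * ξ * P = 0 := by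
    rw [hξ]
    calc P * (P * Ω - Ω * P) * P = P * P * Ω * P - P * Ω * (P * P) := by noncomm_ring
    _ = 0 := by rw [hproj]; exact sub_self _
  have hA : ξ * P * P = ξ * P := by rw [Matrix.mul_assoc, hproj]
  have hB : P * P * ξ = P * ξ := by rw [hproj]
  have e1 : (ξ * P - P * ξ) * P - P * (ξ * P - P * ξ) = ξ := by
    calc (ξ * P - P * ξ) * P - P * (ξ * P - P * ξ)
        = ξ * P * P + P * P * ξ - (P * ξ * P + P * ξ * P) := by noncomm_ring
    _ = ξ * P + P * ξ := by rw [hPXP, hA, hB]; simp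
    _ = ξ := by
        rw [hξ]
        calc (P * Ω - Ω * P) * P + P * (P * Ω - Ω * P)
            = P * Ω * P - Ω * (P * P) + (P * P) * Ω - P * Ω * P := by noncomm_ring
        _ = P * Ω - Ω * P := by rw [hproj]; abel
  symm
  refine congrFun (congrFun ?_ i) j
  calc (θ * Ψ * θᵀ * P * θ + -(P * θ * Ψ)) * θᵀ
      = (θ * Ψ * θᵀ) * P * (θ * θᵀ) - P * (θ * Ψ * θᵀ) := by noncomm_ring
  _ = (ξ * P - P * ξ) * P * 1 - P * (ξ * P - P * ξ) := by rw [hcanc, hθθ]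
  _ = (ξ * P - P * ξ) * P - P * (ξ * P - P * ξ) := by rw [Matrix.mul_one]
  _ = ξ := e1
end

section
/- In the setting of Lemma 3 of the paper: let P = UUᵀ with V = [U|U^⊥] ∈ O(m), ξ ∈ T_P Gr_{k,m} with A = con_V(ξ), QR-decompose A = θ_A [R;0], set θ = V diag(I_k, θ_A), and let θ_M ∈ O(2k) be the Q-factor of M(R) = [[I_k,−Rᵀ],[R,I_k]]. Then the matrix Ũ := θ diag(θ_M, I_{m−2k}) [I_k; 0] lies in St_{k,m} and satisfies α_{P,θ}(ξ) = Ũ Ũᵀ, where α_{P,θ} is the retraction of Lemma 1. -/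
open Matrix

/-- Weight function realizing the natural linear order on `Fin k ⊕ Fin k`. -/
def wt2 (k : ℕ) : Fin k ⊕ Fin k → ℕ :=
  Sum.elim (fun i => (i : ℕ)) (fun i => k + (i : ℕ))

/-- Weight function realizing the natural linear order on
`Fin k ⊕ (Fin k ⊕ Fin j)`. -/
def wt3 (k j : ℕ) : Fin k ⊕ (Fin k ⊕ Fin j) → ℕ :=
  Sum.elim (fun i => (i : ℕ)) (Sum.elim (fun i => k + (i : ℕ)) (fun i => k + k + (i : ℕ)))

lemma qr_unique_fin {n : ℕ} (Q₁ Q₂ R₁ R₂ : Matrix (Fin n) (Fin n) ℝ)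
    (hQ₁ : Q₁ᵀ * Q₁ = 1) (hQ₂ : Q₂ᵀ * Q₂ = 1)
    (hR₁ : R₁.BlockTriangular id) (hR₂ : R₂.BlockTriangular id)
    (hd₁ : ∀ i, 0 < R₁ i i) (hd₂ : ∀ i, 0 < R₂ i i)
    (heq : Q₁ * R₁ = Q₂ * R₂) : Q₁ = Q₂ := by
  have hdet₁ : IsUnit R₁.det := by
    rw [det_of_upperTriangular hR₁]
    exact (Finset.prod_pos fun i _ => hd₁ i).ne'.isUnit
  have hdet₂ : IsUnit R₂.det := by
    rw [det_of_upperTriangular hR₂]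
    exact (Finset.prod_pos fun i _ => hd₂ i).ne'.isUnit
  haveI : Invertible R₁ := R₁.invertibleOfIsUnitDet hdet₁
  haveI : Invertible R₂ := R₂.invertibleOfIsUnitDet hdet₂
  set T := Q₂ᵀ * Q₁ with hT
  have hQ₂Q₂ : Q₂ * Q₂ᵀ = 1 := mul_eq_one_comm.mp hQ₂
  have hQ₁Q₁ : Q₁ * Q₁ᵀ = 1 := mul_eq_one_comm.mp hQ₁
  have hTR : T * R₁ = R₂ := by
    have := congrArg (fun M => Q₂ᵀ * M) heq
    simpa [← Matrix.mul_assoc, hQ₂, Matrix.one_mul] using this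
  have hTR' : Tᵀ * R₂ = R₁ := by
    have := congrArg (fun M => Q₁ᵀ * M) heq.symm
    simpa [hT, transpose_mul, ← Matrix.mul_assoc, hQ₁, Matrix.one_mul] using this
  have hTeq : T = R₂ * R₁⁻¹ := by
    rw [← hTR, Matrix.mul_inv_cancel_right_of_invertible]
  have hTeq' : Tᵀ = R₁ * R₂⁻¹ := by
    rw [← hTR', Matrix.mul_inv_cancel_right_of_invertible]
  have hTt : T.BlockTriangular id := by
    rw [hTeq]; exact hR₂.mul (blockTriangular_inv_of_blockTriangular hR₁)
  have hTt' : Tᵀ.BlockTriangular id := by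
    rw [hTeq']; exact hR₁.mul (blockTriangular_inv_of_blockTriangular hR₂)
  have hTdiag : ∀ i j, i ≠ j → T i j = 0 := by
    intro i j hij
    rcases lt_or_gt_of_ne hij with h | h
    · have := hTt' h
      simpa [transpose_apply] using this
    · exact hTt h
  have hTii : ∀ i, T i i = 1 := by
    intro i
    have h1 : T i i * R₁ i i = R₂ i i := by
      have := congrFun (congrFun hTR i) i
      rwa [mul_apply, Finset.sum_eq_single i (fun l _ hl => by
        rw [hTdiag i l (Ne.symm hl), zero_mul]) (by simp)] at this
    have hpos : 0 < T i i := by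
      have := hd₂ i; nlinarith [hd₁ i]
    have hTT : Tᵀ * T = 1 := by
      rw [hT, transpose_mul, transpose_transpose, Matrix.mul_assoc,
        ← Matrix.mul_assoc Q₂, hQ₂Q₂, Matrix.one_mul, hQ₁]
    have h2 : T i i * T i i = 1 := by
      have := congrFun (congrFun hTT i) i
      rwa [mul_apply, Finset.sum_eq_single i (fun l _ hl => by
        rw [transpose_apply, hTdiag l i hl, zero_mul]) (by simp), transpose_apply,
        one_apply_eq] at this
    nlinarith
  have hT1 : T = 1 := by
    ext i j
    rcases eq_or_ne i j with rfl | h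
    · rw [hTii, one_apply_eq]
    · rw [hTdiag i j h, one_apply_ne h]
  calc Q₁ = Q₂ * (Q₂ᵀ * Q₁) := by rw [← Matrix.mul_assoc, hQ₂Q₂, Matrix.one_mul]
  _ = Q₂ := by rw [← hT, hT1, Matrix.mul_one]

lemma qr_unique_wt {n : Type*} [Fintype n] [DecidableEq n] {N : ℕ} (e : n ≃ Fin N)
    (b : n → ℕ) (hb : ∀ x y, b x < b y ↔ e x < e y)
    (Q₁ Q₂ R₁ R₂ : Matrix n n ℝ)
    (hQ₁ : Q₁ᵀ * Q₁ = 1) (hQ₂ : Q₂ᵀ * Q₂ = 1)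
    (hR₁ : R₁.BlockTriangular b) (hR₂ : R₂.BlockTriangular b)
    (hd₁ : ∀ i, 0 < R₁ i i) (hd₂ : ∀ i, 0 < R₂ i i)
    (heq : Q₁ * R₁ = Q₂ * R₂) : Q₁ = Q₂ := by
  have orth : ∀ Q : Matrix n n ℝ, Qᵀ * Q = 1 →
      (Q.submatrix e.symm e.symm)ᵀ * (Q.submatrix e.symm e.symm) = 1 := by
    intro Q hQ
    rw [transpose_submatrix, submatrix_mul_equiv, hQ, submatrix_one_equiv]
  have tri : ∀ Rm : Matrix n n ℝ, Rm.BlockTriangular b →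
      (Rm.submatrix e.symm e.symm).BlockTriangular id := by
    intro Rm hRm p q hpq
    refine hRm ?_
    rw [hb]
    simpa using hpq
  have key := qr_unique_fin (Q₁.submatrix e.symm e.symm) (Q₂.submatrix e.symm e.symm)
      (R₁.submatrix e.symm e.symm) (R₂.submatrix e.symm e.symm)
      (orth _ hQ₁) (orth _ hQ₂) (tri _ hR₁) (tri _ hR₂)
      (fun i => hd₁ _) (fun i => hd₂ _) ?_
  · have := congrArg (fun M : Matrix (Fin N) (Fin N) ℝ => M.submatrix e e) key
    simpa [submatrix_submatrix] using this
  · rw [submatrix_mul_equiv, submatrix_mul_equiv, heq]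

set_option maxHeartbeats 1600000 in
/-- Lemma 3 of the paper: with `P = UUᵀ`, `V = [U | U^⊥]`, a tangent vector
`ξ` with coordinates `A = con_V(ξ)`, QR-decomposition `A = θ_A [R; 0]`,
`θ = V diag(I_k, θ_A)`, and `θ_M` the orthogonal Q-factor of
`M(R) = [[I_k, −Rᵀ],[R, I_k]]`, the Stiefel matrix
`Ũ = θ diag(θ_M, I_{m−2k}) [I_k; 0]` satisfies `α_{P,θ}(ξ) = Ũ Ũᵀ`,
where `α_{P,θ}(ξ) = θ q θᵀ P θ qᵀ θᵀ` and `q` is the orthogonal Q-factor of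
`I + θᵀ[ξ,P]θ`. The ambient index set `Fin k ⊕ (Fin k ⊕ Fin j)` realizes
dimension `m = 2k + j`, i.e. `m ≥ 2k`. -/
theorem retraction_via_stiefel_update
    (k j : ℕ)
    (U : Matrix (Fin k ⊕ (Fin k ⊕ Fin j)) (Fin k) ℝ)
    (Uperp : Matrix (Fin k ⊕ (Fin k ⊕ Fin j)) (Fin k ⊕ Fin j) ℝ)
    (hU : Uᵀ * U = 1) (hUperp : Uperpᵀ * Uperp = 1) (horth : Uᵀ * Uperp = 0)
    (hspan : U * Uᵀ + Uperp * Uperpᵀ = 1)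
    (P : Matrix (Fin k ⊕ (Fin k ⊕ Fin j)) (Fin k ⊕ (Fin k ⊕ Fin j)) ℝ)
    (hP : P = U * Uᵀ)
    (V : Matrix (Fin k ⊕ (Fin k ⊕ Fin j)) (Fin k ⊕ (Fin k ⊕ Fin j)) ℝ)
    (hV : V = fromCols U Uperp)
    (Ω ξ : Matrix (Fin k ⊕ (Fin k ⊕ Fin j)) (Fin k ⊕ (Fin k ⊕ Fin j)) ℝ)
    (hΩ : Ωᵀ = -Ω) (hξ : ξ = P * Ω - Ω * P)
    (A : Matrix (Fin k ⊕ Fin j) (Fin k) ℝ) (hA : A = Uperpᵀ * ξ * U)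
    (θA : Matrix (Fin k ⊕ Fin j) (Fin k ⊕ Fin j) ℝ)
    (R : Matrix (Fin k) (Fin k) ℝ)
    (hθA : θAᵀ * θA = 1) (hR : R.BlockTriangular (id : Fin k → Fin k))
    (hAQR : A = θA * fromRows R 0)
    (θ : Matrix (Fin k ⊕ (Fin k ⊕ Fin j)) (Fin k ⊕ (Fin k ⊕ Fin j)) ℝ)
    (hθ : θ = V * fromBlocks 1 0 0 θA)
    (θM : Matrix (Fin k ⊕ Fin k) (Fin k ⊕ Fin k) ℝ)
    (hθM : θMᵀ * θM = 1)
    (hθMQR : ∃ RM : Matrix (Fin k ⊕ Fin k) (Fin k ⊕ Fin k) ℝ,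
        RM.BlockTriangular (wt2 k) ∧ (∀ i, 0 < RM i i) ∧
        fromBlocks 1 (-Rᵀ) R 1 = θM * RM)
    (q : Matrix (Fin k ⊕ (Fin k ⊕ Fin j)) (Fin k ⊕ (Fin k ⊕ Fin j)) ℝ)
    (hq : qᵀ * q = 1)
    (hqQR : ∃ Rq : Matrix (Fin k ⊕ (Fin k ⊕ Fin j)) (Fin k ⊕ (Fin k ⊕ Fin j)) ℝ,
        Rq.BlockTriangular (wt3 k j) ∧ (∀ i, 0 < Rq i i) ∧
        1 + θᵀ * (ξ * P - P * ξ) * θ = q * Rq)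
    (Utilde : Matrix (Fin k ⊕ (Fin k ⊕ Fin j)) (Fin k) ℝ)
    (hUtilde : Utilde =
      θ *
        ((fromBlocks θM 0 0 (1 : Matrix (Fin j) (Fin j) ℝ)).submatrix
          (Equiv.sumAssoc (Fin k) (Fin k) (Fin j)).symm
          (Equiv.sumAssoc (Fin k) (Fin k) (Fin j)).symm) *
        ((fromRows (fromRows (1 : Matrix (Fin k) (Fin k) ℝ) (0 : Matrix (Fin k) (Fin k) ℝ))
            (0 : Matrix (Fin j) (Fin k) ℝ)).submatrix
          (Equiv.sumAssoc (Fin k) (Fin k) (Fin j)).symm id)) :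
    Utildeᵀ * Utilde = 1 ∧
    θ * q * θᵀ * P * θ * qᵀ * θᵀ = Utilde * Utildeᵀ := by
  obtain ⟨RM, hRMtri, hRMpos, hMQR⟩ := hθMQR
  obtain ⟨Rq, hRqtri, hRqpos, hqQRe⟩ := hqQR
  set S := (fromBlocks θM 0 0 (1 : Matrix (Fin j) (Fin j) ℝ)).submatrix
      (Equiv.sumAssoc (Fin k) (Fin k) (Fin j)).symm
      (Equiv.sumAssoc (Fin k) (Fin k) (Fin j)).symm with hSdef
  set E := (fromRows (fromRows (1 : Matrix (Fin k) (Fin k) ℝ) (0 : Matrix (Fin k) (Fin k) ℝ))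
      (0 : Matrix (Fin j) (Fin k) ℝ)).submatrix
      (Equiv.sumAssoc (Fin k) (Fin k) (Fin j)).symm id with hEdef
  set X := fromRows R (0 : Matrix (Fin j) (Fin k) ℝ) with hXdef
  have horth' : Uperpᵀ * U = 0 := by
    have := congrArg Matrix.transpose horth
    simpa using this
  -- cancellation helpers
  have cUU : ∀ (p : Type) (M : Matrix (Fin k) p ℝ), Uᵀ * (U * M) = M := fun p M => by
    rw [← Matrix.mul_assoc, hU, Matrix.one_mul]
  have cPP : ∀ (p : Type) (M : Matrix (Fin k ⊕ Fin j) p ℝ), Uperpᵀ * (Uperp * M) = M :=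
    fun p M => by rw [← Matrix.mul_assoc, hUperp, Matrix.one_mul]
  have cUP : ∀ (p : Type) (M : Matrix (Fin k ⊕ Fin j) p ℝ), Uᵀ * (Uperp * M) = 0 :=
    fun p M => by rw [← Matrix.mul_assoc, horth, Matrix.zero_mul]
  have cPU : ∀ (p : Type) (M : Matrix (Fin k) p ℝ), Uperpᵀ * (U * M) = 0 :=
    fun p M => by rw [← Matrix.mul_assoc, horth', Matrix.zero_mul]
  have hξs : ξᵀ = ξ := by
    rw [hξ, hP]
    simp only [transpose_sub, transpose_mul, transpose_transpose, hΩ]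
    noncomm_ring
  have hUξU : Uᵀ * ξ * U = 0 := by
    simp [hξ, hP, Matrix.mul_sub, Matrix.sub_mul, Matrix.mul_assoc, cUU, cPU, hU]
  have hUpξUp : Uperpᵀ * ξ * Uperp = 0 := by
    simp [hξ, hP, Matrix.mul_sub, Matrix.sub_mul, Matrix.mul_assoc, cUU, cPU, cUP, horth, horth']
  have hUξUp : Uᵀ * ξ * Uperp = Aᵀ := by
    rw [hA]
    simp only [transpose_mul, transpose_transpose, hξs, Matrix.mul_assoc]
  have hVtV : Vᵀ * V = 1 := by
    rw [hV, transpose_fromCols, fromRows_mul_fromCols, hU, hUperp, horth, horth',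
      fromBlocks_one]
  have hVVt : V * Vᵀ = 1 := by
    rw [hV, transpose_fromCols, fromCols_mul_fromRows, hspan]
  have hVξV : Vᵀ * ξ * V = fromBlocks 0 Aᵀ A 0 := by
    rw [hV, transpose_fromCols, fromRows_mul, fromRows_mul_fromCols, hUξU, hUpξUp,
      hUξUp, ← hA]
  have hVPV : Vᵀ * P * V = fromBlocks 1 0 0 0 := by
    rw [hV, transpose_fromCols, fromRows_mul, fromRows_mul_fromCols]
    rw [hP]
    simp [Matrix.mul_assoc, cUU, cPU, hU, horth]
  have hDtD : (fromBlocks (1 : Matrix (Fin k) (Fin k) ℝ) 0 0 θA)ᵀ *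
      fromBlocks 1 0 0 θA = 1 := by
    simp [fromBlocks_transpose, fromBlocks_multiply, hθA, fromBlocks_one]
  have hDDt : (fromBlocks (1 : Matrix (Fin k) (Fin k) ℝ) 0 0 θA) *
      (fromBlocks 1 0 0 θA)ᵀ = 1 := by
    simp [fromBlocks_transpose, fromBlocks_multiply, mul_eq_one_comm.mp hθA, fromBlocks_one]
  have hθtθ : θᵀ * θ = 1 := by
    rw [hθ, transpose_mul, Matrix.mul_assoc, ← Matrix.mul_assoc Vᵀ, hVtV, Matrix.one_mul, hDtD]
  have hθθt : θ * θᵀ = 1 := by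
    rw [hθ, transpose_mul, Matrix.mul_assoc, ← Matrix.mul_assoc _ _ Vᵀ, hDDt, Matrix.one_mul,
      hVVt]
  have conj : ∀ M : Matrix (Fin k ⊕ (Fin k ⊕ Fin j)) (Fin k ⊕ (Fin k ⊕ Fin j)) ℝ,
      θᵀ * M * θ = (fromBlocks 1 0 0 θA)ᵀ * (Vᵀ * M * V) * fromBlocks 1 0 0 θA := by
    intro M
    rw [hθ, transpose_mul]
    simp only [Matrix.mul_assoc]
  have hθAA : θAᵀ * A = X := by
    rw [show A = θA * X from hAQR, ← Matrix.mul_assoc, hθA, Matrix.one_mul]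
  have hAθA : Aᵀ * θA = Xᵀ := by
    rw [show A = θA * X from hAQR, transpose_mul, Matrix.mul_assoc, hθA, Matrix.mul_one]
  have hθPθ : θᵀ * P * θ = fromBlocks 1 0 0 0 := by
    rw [conj, hVPV]
    simp [fromBlocks_transpose, fromBlocks_multiply]
  have hθξθ : θᵀ * ξ * θ = fromBlocks 0 Xᵀ X 0 := by
    rw [conj, hVξV]
    simp [fromBlocks_transpose, fromBlocks_multiply, ← Matrix.mul_assoc, hAθA]
    simp [Matrix.mul_assoc, hθAA]
  have hcomm : 1 + θᵀ * (ξ * P - P * ξ) * θ = fromBlocks 1 (-Xᵀ) X 1 := by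
    have h1 : θᵀ * (ξ * P) * θ = (θᵀ * ξ * θ) * (θᵀ * P * θ) := by
      simp only [Matrix.mul_assoc]
      rw [← Matrix.mul_assoc θ θᵀ, hθθt, Matrix.one_mul]
    have h2 : θᵀ * (P * ξ) * θ = (θᵀ * P * θ) * (θᵀ * ξ * θ) := by
      simp only [Matrix.mul_assoc]
      rw [← Matrix.mul_assoc θ θᵀ, hθθt, Matrix.one_mul]
    rw [Matrix.mul_sub, Matrix.sub_mul, h1, h2, hθξθ, hθPθ]
    ext (x | x) (y | y) <;> simp [fromBlocks_multiply, Matrix.one_apply]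
  -- the reassociated block matrices
  have hre1 : ((fromBlocks (fromBlocks (1 : Matrix (Fin k) (Fin k) ℝ) (-Rᵀ) R 1) 0 0
        (1 : Matrix (Fin j) (Fin j) ℝ)).submatrix
        (Equiv.sumAssoc (Fin k) (Fin k) (Fin j)).symm
        (Equiv.sumAssoc (Fin k) (Fin k) (Fin j)).symm) = fromBlocks 1 (-Xᵀ) X 1 := by
    ext (i | i | i) (l | l | l) <;>
      simp [hXdef, fromBlocks, Matrix.one_apply, Equiv.sumAssoc, submatrix_apply,
        fromRows_apply_inl, fromRows_apply_inr]
  have hS : Sᵀ * S = 1 := by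
    rw [hSdef, transpose_submatrix, submatrix_mul_equiv,
      show (fromBlocks θM 0 0 (1 : Matrix (Fin j) (Fin j) ℝ))ᵀ *
        fromBlocks θM 0 0 (1 : Matrix (Fin j) (Fin j) ℝ) = 1 by
          simp [fromBlocks_transpose, fromBlocks_multiply, hθM, fromBlocks_one],
      submatrix_one_equiv]
  have hSR : S * ((fromBlocks RM 0 0 (1 : Matrix (Fin j) (Fin j) ℝ)).submatrix
      (Equiv.sumAssoc (Fin k) (Fin k) (Fin j)).symm
      (Equiv.sumAssoc (Fin k) (Fin k) (Fin j)).symm) = fromBlocks 1 (-Xᵀ) X 1 := by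
    rw [hSdef, submatrix_mul_equiv]
    rw [show (fromBlocks θM 0 0 (1 : Matrix (Fin j) (Fin j) ℝ)) *
        (fromBlocks RM 0 0 (1 : Matrix (Fin j) (Fin j) ℝ)) =
        fromBlocks (θM * RM) 0 0 1 by simp [fromBlocks_multiply]]
    rw [← hMQR, hre1]
  have hRq'tri : ((fromBlocks RM 0 0 (1 : Matrix (Fin j) (Fin j) ℝ)).submatrix
      (Equiv.sumAssoc (Fin k) (Fin k) (Fin j)).symm
      (Equiv.sumAssoc (Fin k) (Fin k) (Fin j)).symm).BlockTriangular (wt3 k j) := by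
    rintro (a | a | a) (b | b | b) hab <;>
      simp only [wt3, Sum.elim_inl, Sum.elim_inr, submatrix_apply,
        Equiv.sumAssoc_symm_apply_inl, Equiv.sumAssoc_symm_apply_inr_inl,
        Equiv.sumAssoc_symm_apply_inr_inr, fromBlocks_apply₁₁, fromBlocks_apply₁₂,
        fromBlocks_apply₂₁, fromBlocks_apply₂₂, Matrix.zero_apply] at hab ⊢
    · exact hRMtri (by simpa [wt2] using hab)
    · exact hRMtri (by simpa [wt2] using hab)
    · exact hRMtri (by simpa [wt2] using hab)
    · exact hRMtri (by simpa [wt2] using hab)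
    · exact one_apply_ne (by rintro rfl; omega)
  have hRq'pos : ∀ i, 0 < ((fromBlocks RM 0 0 (1 : Matrix (Fin j) (Fin j) ℝ)).submatrix
      (Equiv.sumAssoc (Fin k) (Fin k) (Fin j)).symm
      (Equiv.sumAssoc (Fin k) (Fin k) (Fin j)).symm) i i := by
    rintro (a | a | a) <;>
      simp only [submatrix_apply, Equiv.sumAssoc_symm_apply_inl,
        Equiv.sumAssoc_symm_apply_inr_inl, Equiv.sumAssoc_symm_apply_inr_inr,
        fromBlocks_apply₁₁, fromBlocks_apply₂₂, one_apply_eq]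
    · exact hRMpos _
    · exact hRMpos _
    · exact one_pos
  -- order equivalence for wt3
  have hb3 : ∀ x y, wt3 k j x < wt3 k j y ↔
      ((Equiv.sumCongr (Equiv.refl (Fin k)) finSumFinEquiv).trans finSumFinEquiv) x <
      ((Equiv.sumCongr (Equiv.refl (Fin k)) finSumFinEquiv).trans finSumFinEquiv) y := by
    rintro (x | x | x) (y | y | y) <;>
      simp only [wt3, Sum.elim_inl, Sum.elim_inr, Equiv.trans_apply, Equiv.sumCongr_apply,
        Sum.map_inl, Sum.map_inr, Equiv.refl_apply, finSumFinEquiv_apply_left,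
        finSumFinEquiv_apply_right, Fin.lt_def, Fin.coe_castAdd, Fin.coe_natAdd, id_eq] <;>
      omega
  have hqS : q = S := by
    refine qr_unique_wt ((Equiv.sumCongr (Equiv.refl (Fin k)) finSumFinEquiv).trans
      finSumFinEquiv) (wt3 k j) hb3 q S Rq _ hq hS hRqtri hRq'tri hRqpos hRq'pos ?_
    rw [← hqQRe, hcomm, hSR]
  -- properties of E
  have hEtE : Eᵀ * E = 1 := by
    rw [hEdef, transpose_submatrix, submatrix_mul_equiv]
    simp [transpose_fromRows, fromCols_mul_fromRows]
  have hGGt : (fromRows (fromRows (1 : Matrix (Fin k) (Fin k) ℝ)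
        (0 : Matrix (Fin k) (Fin k) ℝ)) (0 : Matrix (Fin j) (Fin k) ℝ)) *
      (fromRows (fromRows (1 : Matrix (Fin k) (Fin k) ℝ)
        (0 : Matrix (Fin k) (Fin k) ℝ)) (0 : Matrix (Fin j) (Fin k) ℝ))ᵀ =
      fromBlocks (fromBlocks 1 0 0 0) 0 0 (0 : Matrix (Fin j) (Fin j) ℝ) := by
    ext ((a | a) | a) ((b | b) | b) <;>
      simp [Matrix.mul_apply, fromBlocks, Matrix.one_apply, fromRows_apply_inl,
        fromRows_apply_inr]
  have hre2 : ((fromBlocks (fromBlocks (1 : Matrix (Fin k) (Fin k) ℝ) 0 0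
        (0 : Matrix (Fin k) (Fin k) ℝ)) 0 0 (0 : Matrix (Fin j) (Fin j) ℝ)).submatrix
        (Equiv.sumAssoc (Fin k) (Fin k) (Fin j)).symm
        (Equiv.sumAssoc (Fin k) (Fin k) (Fin j)).symm) =
      fromBlocks 1 0 0 (0 : Matrix (Fin k ⊕ Fin j) (Fin k ⊕ Fin j) ℝ) := by
    ext (i | i | i) (l | l | l) <;>
      simp [fromBlocks, Matrix.one_apply, Equiv.sumAssoc, submatrix_apply]
  have hEEt : E * Eᵀ = fromBlocks 1 0 0 (0 : Matrix (Fin k ⊕ Fin j) (Fin k ⊕ Fin j) ℝ) := by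
    rw [hEdef, transpose_submatrix]
    rw [← Matrix.submatrix_mul _ _ _ _ _ Function.bijective_id, hGGt, hre2]
  constructor
  · rw [hUtilde]
    have key1 : (θ * S * E)ᵀ * (θ * S * E) = Eᵀ * (Sᵀ * ((θᵀ * θ) * (S * E))) := by
      simp only [transpose_mul, Matrix.mul_assoc]
    rw [key1, hθtθ, Matrix.one_mul, ← Matrix.mul_assoc Sᵀ S, hS, Matrix.one_mul, hEtE]
  · calc θ * q * θᵀ * P * θ * qᵀ * θᵀ
        = θ * (q * ((θᵀ * P * θ) * (qᵀ * θᵀ))) := by simp only [Matrix.mul_assoc]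
      _ = θ * (S * ((E * Eᵀ) * (Sᵀ * θᵀ))) := by rw [hqS, hθPθ, hEEt]
      _ = Utilde * Utildeᵀ := by
          rw [hUtilde]
          simp only [transpose_mul, Matrix.mul_assoc]
end

section
/- In the setting of Lemma 4 of the paper: with θ, ξ, P, Ũ as in Lemma 3 and Ṽ = [Ũ | Ũ^⊥], for any η ∈ T_P Gr_{k,m} with B = con_V(η), the transported vector τ_{ξ,P,θ}(η) satisfies con_{Ṽ}(τ_{ξ,P,θ}(η)) = θ_Aᵀ B (with appropriate choice of Ũ^⊥), i.e. Ṽᵀ τ_{ξ,P,θ}(η) Ṽ = [[0, Bᵀθ_A],[θ_AᵀB, 0]]. -/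
open Matrix

/-- Lemma 4 of the paper: in the setting of Lemma 3 (with
`q = q_{θᵀ[ξ,P]θ}(1) = diag(θ_M, I_{m−2k})`), for any tangent vector `η` with
coordinates `B = con_V(η)`, the transported vector
`τ_{ξ,P,θ}(η) = θ q θᵀ η θ qᵀ θᵀ` satisfies, for an appropriate choice of
`Ũ^⊥`, `Ṽᵀ τ_{ξ,P,θ}(η) Ṽ = [[0, Bᵀθ_A],[θ_AᵀB, 0]]` where
`Ṽ = [Ũ | Ũ^⊥]`; in particular `con_{Ṽ}(τ_{ξ,P,θ}(η)) = θ_Aᵀ B`.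
The ambient index set `Fin k ⊕ (Fin k ⊕ Fin j)` realizes `m = 2k + j`. -/
theorem vector_transport_coordinates
    (k j : ℕ)
    (U : Matrix (Fin k ⊕ (Fin k ⊕ Fin j)) (Fin k) ℝ)
    (Uperp : Matrix (Fin k ⊕ (Fin k ⊕ Fin j)) (Fin k ⊕ Fin j) ℝ)
    (hU : Uᵀ * U = 1) (hUperp : Uperpᵀ * Uperp = 1) (horth : Uᵀ * Uperp = 0)
    (hspan : U * Uᵀ + Uperp * Uperpᵀ = 1)
    (P : Matrix (Fin k ⊕ (Fin k ⊕ Fin j)) (Fin k ⊕ (Fin k ⊕ Fin j)) ℝ)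
    (hP : P = U * Uᵀ)
    (V : Matrix (Fin k ⊕ (Fin k ⊕ Fin j)) (Fin k ⊕ (Fin k ⊕ Fin j)) ℝ)
    (hV : V = fromCols U Uperp)
    (Ω ξ : Matrix (Fin k ⊕ (Fin k ⊕ Fin j)) (Fin k ⊕ (Fin k ⊕ Fin j)) ℝ)
    (hΩ : Ωᵀ = -Ω) (hξ : ξ = P * Ω - Ω * P)
    (A : Matrix (Fin k ⊕ Fin j) (Fin k) ℝ) (hA : A = Uperpᵀ * ξ * U)
    (θA : Matrix (Fin k ⊕ Fin j) (Fin k ⊕ Fin j) ℝ)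
    (R : Matrix (Fin k) (Fin k) ℝ)
    (hθA : θAᵀ * θA = 1) (hθA' : θA * θAᵀ = 1)
    (hR : R.BlockTriangular (id : Fin k → Fin k))
    (hAQR : A = θA * fromRows R 0)
    (θ : Matrix (Fin k ⊕ (Fin k ⊕ Fin j)) (Fin k ⊕ (Fin k ⊕ Fin j)) ℝ)
    (hθ : θ = V * fromBlocks 1 0 0 θA)
    (θM : Matrix (Fin k ⊕ Fin k) (Fin k ⊕ Fin k) ℝ)
    (hθM : θMᵀ * θM = 1)
    (q : Matrix (Fin k ⊕ (Fin k ⊕ Fin j)) (Fin k ⊕ (Fin k ⊕ Fin j)) ℝ)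
    (hq : q = (fromBlocks θM 0 0 (1 : Matrix (Fin j) (Fin j) ℝ)).submatrix
      (Equiv.sumAssoc (Fin k) (Fin k) (Fin j)).symm
      (Equiv.sumAssoc (Fin k) (Fin k) (Fin j)).symm)
    (Utilde : Matrix (Fin k ⊕ (Fin k ⊕ Fin j)) (Fin k) ℝ)
    (hUtilde : Utilde =
      θ * q *
        ((fromRows (fromRows (1 : Matrix (Fin k) (Fin k) ℝ) (0 : Matrix (Fin k) (Fin k) ℝ))
            (0 : Matrix (Fin j) (Fin k) ℝ)).submatrix
          (Equiv.sumAssoc (Fin k) (Fin k) (Fin j)).symm id))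
    (η : Matrix (Fin k ⊕ (Fin k ⊕ Fin j)) (Fin k ⊕ (Fin k ⊕ Fin j)) ℝ)
    (hη : ∃ Ω' : Matrix (Fin k ⊕ (Fin k ⊕ Fin j)) (Fin k ⊕ (Fin k ⊕ Fin j)) ℝ,
        Ω'ᵀ = -Ω' ∧ η = P * Ω' - Ω' * P)
    (B : Matrix (Fin k ⊕ Fin j) (Fin k) ℝ) (hB : B = Uperpᵀ * η * U) :
    ∃ Utildeperp : Matrix (Fin k ⊕ (Fin k ⊕ Fin j)) (Fin k ⊕ Fin j) ℝ,
      Utildeperpᵀ * Utildeperp = 1 ∧ Utildeᵀ * Utildeperp = 0 ∧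
      (fromCols Utilde Utildeperp)ᵀ * (θ * q * θᵀ * η * θ * qᵀ * θᵀ) *
          fromCols Utilde Utildeperp =
        fromBlocks 0 (Bᵀ * θA) (θAᵀ * B) 0 := by
  classical
  obtain ⟨Ω', hΩ', hη'⟩ := hη
  have hUpU : Uperpᵀ * U = 0 := by
    have := congrArg transpose horth
    simpa [transpose_mul] using this
  -- the embedding in hUtilde is `fromRows 1 0`
  have hE : ((fromRows (fromRows (1 : Matrix (Fin k) (Fin k) ℝ) (0 : Matrix (Fin k) (Fin k) ℝ))
            (0 : Matrix (Fin j) (Fin k) ℝ)).submatrix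
          (Equiv.sumAssoc (Fin k) (Fin k) (Fin j)).symm id) =
      fromRows (1 : Matrix (Fin k) (Fin k) ℝ)
        (0 : Matrix (Fin k ⊕ Fin j) (Fin k) ℝ) := by
    ext i b
    rcases i with i | i
    · simp [Equiv.sumAssoc, fromRows_apply_inl, fromRows_apply_inr]
    · rcases i with i | i <;> simp [Equiv.sumAssoc, fromRows_apply_inl, fromRows_apply_inr]
  -- orthogonality of θ
  have hVV : (fromCols U Uperp)ᵀ * fromCols U Uperp = 1 := by
    rw [transpose_fromCols, fromRows_mul_fromCols, hU, hUperp, horth, hUpU,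
      fromBlocks_one]
  have hθθ : θᵀ * θ = 1 := by
    rw [hθ, hV, transpose_mul, Matrix.mul_assoc,
      ← Matrix.mul_assoc (fromCols U Uperp)ᵀ (fromCols U Uperp), hVV, Matrix.one_mul,
      fromBlocks_transpose, fromBlocks_multiply]
    simp [hθA, fromBlocks_one]
  have hθθ' : θ * θᵀ = 1 := mul_eq_one_comm.mp hθθ
  -- orthogonality of q
  have hqq : qᵀ * q = 1 := by
    rw [hq, transpose_submatrix, submatrix_mul_equiv]
    rw [fromBlocks_transpose, fromBlocks_multiply]
    simp [hθM, fromBlocks_one, submatrix_one_equiv]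
  have hqq' : q * qᵀ = 1 := mul_eq_one_comm.mp hqq
  -- cancellation helpers
  have cθ : ∀ {n : Type} (X : Matrix (Fin k ⊕ (Fin k ⊕ Fin j)) n ℝ),
      θᵀ * (θ * X) = X := fun X => by rw [← Matrix.mul_assoc, hθθ, Matrix.one_mul]
  have cθ' : ∀ {n : Type} (X : Matrix (Fin k ⊕ (Fin k ⊕ Fin j)) n ℝ),
      θ * (θᵀ * X) = X := fun X => by rw [← Matrix.mul_assoc, hθθ', Matrix.one_mul]
  have cq : ∀ {n : Type} (X : Matrix (Fin k ⊕ (Fin k ⊕ Fin j)) n ℝ),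
      qᵀ * (q * X) = X := fun X => by rw [← Matrix.mul_assoc, hqq, Matrix.one_mul]
  have cq' : ∀ {n : Type} (X : Matrix (Fin k ⊕ (Fin k ⊕ Fin j)) n ℝ),
      q * (qᵀ * X) = X := fun X => by rw [← Matrix.mul_assoc, hqq', Matrix.one_mul]
  -- symmetry of η
  have hPsym : Pᵀ = P := by rw [hP, transpose_mul, transpose_transpose]
  have hsym : ηᵀ = η := by
    rw [hη', transpose_sub, transpose_mul, transpose_mul, hΩ', hPsym]
    simp only [Matrix.neg_mul, Matrix.mul_neg, sub_neg_eq_add]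
    abel
  -- block computations
  have h00 : Uᵀ * η * U = 0 := by
    rw [hη', hP]
    simp only [Matrix.mul_sub, Matrix.sub_mul, Matrix.mul_assoc]
    simp [hU, ← Matrix.mul_assoc]
  have h11 : Uperpᵀ * η * Uperp = 0 := by
    rw [hη', hP]
    simp only [Matrix.mul_sub, Matrix.sub_mul, Matrix.mul_assoc]
    simp [hUpU, horth, ← Matrix.mul_assoc]
  have h01 : Uᵀ * η * Uperp = Bᵀ := by
    rw [hB]
    simp [transpose_mul, hsym, Matrix.mul_assoc]
  -- the key identity
  have hmid : (fromCols U Uperp)ᵀ * η * fromCols U Uperp =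
      fromBlocks 0 Bᵀ B 0 := by
    rw [transpose_fromCols, fromRows_mul, fromRows_mul_fromCols]
    rw [h00, h01, ← hB, h11]
  have key : θᵀ * (η * θ) = fromBlocks 0 (Bᵀ * θA) (θAᵀ * B) 0 := by
    rw [hθ, transpose_mul]
    have e1 : (fromBlocks (1 : Matrix (Fin k) (Fin k) ℝ) 0 0 θA)ᵀ * Vᵀ *
        (η * (V * fromBlocks 1 0 0 θA)) =
        (fromBlocks (1 : Matrix (Fin k) (Fin k) ℝ) 0 0 θA)ᵀ *
          ((Vᵀ * η * V) * fromBlocks 1 0 0 θA) := by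
      simp only [Matrix.mul_assoc]
    rw [e1, hV, hmid, fromBlocks_transpose]
    simp [fromBlocks_multiply]
  -- choose the complement
  refine ⟨θ * q * fromRows (0 : Matrix (Fin k) (Fin k ⊕ Fin j) ℝ)
      (1 : Matrix (Fin k ⊕ Fin j) (Fin k ⊕ Fin j) ℝ), ?_, ?_, ?_⟩
  · rw [transpose_mul, transpose_mul]
    simp only [Matrix.mul_assoc, cθ, cq]
    rw [transpose_fromRows, fromCols_mul_fromRows]
    simp
  · rw [hUtilde, hE, transpose_mul, transpose_mul]
    simp only [Matrix.mul_assoc, cθ, cq]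
    rw [transpose_fromRows, fromCols_mul_fromRows]
    simp
  · have hcols : fromCols Utilde (θ * q * fromRows (0 : Matrix (Fin k) (Fin k ⊕ Fin j) ℝ)
        (1 : Matrix (Fin k ⊕ Fin j) (Fin k ⊕ Fin j) ℝ)) = θ * q := by
      rw [hUtilde, hE, ← mul_fromCols, fromCols_fromRows_eq_fromBlocks,
        fromBlocks_one, Matrix.mul_one]
    rw [hcols, transpose_mul]
    simp only [Matrix.mul_assoc, cθ, cq, cθ', cq', hqq, hqq', Matrix.mul_one]
    exact key
end
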